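/- arXiv:1208.3267 — 2 statements merged into one kernel-verified Lean document; each statement's English description precedes it below -/
import Mathlib

section
/- For fixed real numbers a and b, the ratio Γ(z+a)/Γ(z+b) is asymptotic to z^{a-b} as z → ∞ along the positive real axis; that is, lim_{z→∞} (Γ(z+a)/Γ(z+b)) / z^{a-b} = 1. -/
open Filter Real

private lemma gamma_log_ub {s x : ℝ} (h0 : 0 ≤ s) (h1 : s ≤ 1) (hx : 0 < x) :
    Real.log (Real.Gamma (x + s)) ≤ Real.log (Real.Gamma x) + s * Real.log x := by
  have h := Real.convexOn_log_Gamma.2 (Set.mem_Ioi.2 hx)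
    (Set.mem_Ioi.2 (by linarith : (0:ℝ) < x + 1))
    (by linarith : (0:ℝ) ≤ 1 - s) h0 (by ring)
  simp only [smul_eq_mul, Function.comp] at h
  rw [show (1 - s) * x + s * (x + 1) = x + s by ring,
    Real.Gamma_add_one hx.ne', Real.log_mul hx.ne' (Real.Gamma_pos_of_pos hx).ne'] at h
  nlinarith [h]

private lemma gamma_log_lb {s x : ℝ} (h0 : 0 ≤ s) (h1 : s ≤ 1) (hx : 0 < x) :
    Real.log x + Real.log (Real.Gamma x) ≤
      Real.log (Real.Gamma (x + s)) + (1 - s) * Real.log (x + s) := by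
  have hxs : 0 < x + s := by linarith
  have h := Real.convexOn_log_Gamma.2 (Set.mem_Ioi.2 hxs)
    (Set.mem_Ioi.2 (by linarith : (0:ℝ) < x + s + 1))
    h0 (by linarith : (0:ℝ) ≤ 1 - s) (by ring)
  simp only [smul_eq_mul, Function.comp] at h
  rw [show s * (x + s) + (1 - s) * (x + s + 1) = x + 1 by ring,
    Real.Gamma_add_one hx.ne',
    Real.log_mul hx.ne' (Real.Gamma_pos_of_pos hx).ne'] at h
  rw [show x + s + 1 = (x + s) + 1 by ring, Real.Gamma_add_one hxs.ne',
    Real.log_mul hxs.ne' (Real.Gamma_pos_of_pos hxs).ne'] at h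
  nlinarith [h]

private lemma ratio_tendsto (c : ℝ) :
    Tendsto (fun x : ℝ => (x + c) / x) atTop (nhds 1) := by
  have h2 : Tendsto (fun x : ℝ => c / x) atTop (nhds 0) :=
    Tendsto.div_atTop tendsto_const_nhds tendsto_id
  have h : Tendsto (fun x : ℝ => 1 + c / x) atTop (nhds 1) := by
    simpa using (tendsto_const_nhds (x := (1:ℝ)) (f := atTop)).add h2
  refine h.congr' ?_
  filter_upwards [eventually_gt_atTop 0] with x hx
  field_simp

private lemma gamma_aux_base {s : ℝ} (h0 : 0 ≤ s) (h1 : s ≤ 1) :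
    Tendsto (fun x : ℝ => Real.Gamma (x + s) / Real.Gamma x / x ^ s) atTop (nhds 1) := by
  have hlow : Tendsto (fun x : ℝ => (x / (x + s)) ^ (1 - s)) atTop (nhds 1) := by
    have h1' : Tendsto (fun x : ℝ => x / (x + s)) atTop (nhds 1) := by
      have h := (ratio_tendsto s).inv₀ one_ne_zero
      rw [inv_one] at h
      refine h.congr' ?_
      filter_upwards [eventually_gt_atTop (max 0 (-s))] with x hx
      have hx0 : 0 < x := lt_of_le_of_lt (le_max_left _ _) hx
      have hxs : 0 < x + s := by
        have := lt_of_le_of_lt (le_max_right 0 (-s)) hx; linarith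
      rw [inv_div]
    have := h1'.rpow_const (p := 1 - s) (Or.inl one_ne_zero)
    simpa using this
  refine tendsto_of_tendsto_of_tendsto_of_le_of_le' hlow tendsto_const_nhds ?_ ?_
  · filter_upwards [eventually_gt_atTop 0] with x hx
    have hxs : 0 < x + s := by linarith
    have hG : 0 < Real.Gamma x := Real.Gamma_pos_of_pos hx
    have hGs : 0 < Real.Gamma (x + s) := Real.Gamma_pos_of_pos hxs
    have hL : (0:ℝ) < (x / (x + s)) ^ (1 - s) := by positivity
    have hR : (0:ℝ) < Real.Gamma (x + s) / Real.Gamma x / x ^ s := by positivity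
    rw [← Real.log_le_log_iff hL hR, Real.log_rpow (by positivity),
      Real.log_div hx.ne' hxs.ne',
      Real.log_div (by positivity) (by positivity : (x:ℝ) ^ s ≠ 0),
      Real.log_div hGs.ne' hG.ne', Real.log_rpow hx]
    nlinarith [gamma_log_lb h0 h1 hx]
  · filter_upwards [eventually_gt_atTop 0] with x hx
    have hxs : 0 < x + s := by linarith
    have hG : 0 < Real.Gamma x := Real.Gamma_pos_of_pos hx
    have hGs : 0 < Real.Gamma (x + s) := Real.Gamma_pos_of_pos hxs
    have hR : (0:ℝ) < Real.Gamma (x + s) / Real.Gamma x / x ^ s := by positivity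
    rw [← Real.log_le_log_iff hR one_pos, Real.log_one,
      Real.log_div (by positivity) (by positivity : (x:ℝ) ^ s ≠ 0),
      Real.log_div hGs.ne' hG.ne', Real.log_rpow hx]
    nlinarith [gamma_log_ub h0 h1 hx]

private lemma gamma_aux (n : ℕ) : ∀ s : ℝ, 0 ≤ s → s ≤ n →
    Tendsto (fun x : ℝ => Real.Gamma (x + s) / Real.Gamma x / x ^ s) atTop (nhds 1) := by
  induction n with
  | zero =>
    intro s h0 h1
    exact gamma_aux_base h0 (by exact_mod_cast h1.trans (by norm_num))
  | succ n ih =>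
    intro s h0 hn
    by_cases hs1 : s ≤ 1
    · exact gamma_aux_base h0 hs1
    · push_neg at hs1
      have h0' : (0:ℝ) ≤ s - 1 := by linarith
      have hn' : s - 1 ≤ (n : ℝ) := by
        push_cast at hn ⊢; linarith
      have key := (ih (s - 1) h0' hn').mul (ratio_tendsto (s - 1))
      rw [mul_one] at key
      refine key.congr' ?_
      filter_upwards [eventually_gt_atTop (max 0 (1 - s))] with x hx
      have hx0 : 0 < x := lt_of_le_of_lt (le_max_left _ _) hx
      have hxs1 : 0 < x + (s - 1) := by
        have := lt_of_le_of_lt (le_max_right 0 (1 - s)) hx; linarith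
      have hG : 0 < Real.Gamma x := Real.Gamma_pos_of_pos hx0
      have hGs : Real.Gamma (x + s) = (x + (s - 1)) * Real.Gamma (x + (s - 1)) := by
        rw [show x + s = (x + (s - 1)) + 1 by ring, Real.Gamma_add_one hxs1.ne']
      have hxp : x ^ s = x ^ (s - 1) * x := by
        rw [← Real.rpow_add_one hx0.ne' (s - 1)]; ring_nf
      have hx1 : (0:ℝ) < x ^ (s - 1) := Real.rpow_pos_of_pos hx0 _
      rw [hGs, hxp]
      field_simp

/-- For fixed reals `a` and `b`, `Γ(z+a)/Γ(z+b) ~ z^(a-b)` as `z → ∞`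
along the positive reals:  `(Γ(z+a)/Γ(z+b)) / z^(a-b) → 1`. -/
theorem gamma_ratio_asymptotic (a b : ℝ) :
    Filter.Tendsto
      (fun z : ℝ => Real.Gamma (z + a) / Real.Gamma (z + b) / z ^ (a - b))
      Filter.atTop (nhds 1) := by
  set m : ℝ := min a b with hm
  have ham : 0 ≤ a - m := by simp [hm, min_le_left]
  have hbm : 0 ≤ b - m := by simp [hm, min_le_right]
  have hcomp : Tendsto (fun z : ℝ => z + m) atTop atTop :=
    tendsto_atTop_add_const_right _ m tendsto_id
  have hA : Tendsto (fun z : ℝ =>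
      Real.Gamma (z + m + (a - m)) / Real.Gamma (z + m) / (z + m) ^ (a - m))
      atTop (nhds 1) :=
    (gamma_aux ⌈a - m⌉₊ (a - m) ham (Nat.le_ceil _)).comp hcomp
  have hB : Tendsto (fun z : ℝ =>
      Real.Gamma (z + m + (b - m)) / Real.Gamma (z + m) / (z + m) ^ (b - m))
      atTop (nhds 1) :=
    (gamma_aux ⌈b - m⌉₊ (b - m) hbm (Nat.le_ceil _)).comp hcomp
  have hC : Tendsto (fun z : ℝ => ((z + m) / z) ^ (a - b)) atTop (nhds 1) := by
    have := (ratio_tendsto m).rpow_const (p := a - b) (Or.inl one_ne_zero)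
    simpa using this
  have key := (hA.div hB one_ne_zero).mul hC
  rw [div_one, one_mul] at key
  refine key.congr' ?_
  filter_upwards [eventually_gt_atTop (1 + |a| + |b|)] with z hz
  have hza : 0 < z + a := by
    have := neg_abs_le a; have := abs_nonneg b; linarith
  have hzb : 0 < z + b := by
    have := neg_abs_le b; have := abs_nonneg a; linarith
  have hzm : 0 < z + m := by
    rcases min_cases a b with ⟨h, _⟩ | ⟨h, _⟩ <;> rw [hm, h] <;> assumption
  have hz0 : 0 < z := by
    have := abs_nonneg a; have := abs_nonneg b; linarith
  have hGb : 0 < Real.Gamma (z + b) := Real.Gamma_pos_of_pos hzb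
  have hGm : 0 < Real.Gamma (z + m) := Real.Gamma_pos_of_pos hzm
  have e1 : z + m + (a - m) = z + a := by ring
  have e2 : z + m + (b - m) = z + b := by ring
  have e3 : (z + m) ^ (a - m) = (z + m) ^ (a - b) * (z + m) ^ (b - m) := by
    rw [← Real.rpow_add hzm]; ring_nf
  have e4 : ((z + m) / z) ^ (a - b) = (z + m) ^ (a - b) / z ^ (a - b) :=
    Real.div_rpow hzm.le hz0.le (a - b)
  have p1 : (0:ℝ) < (z + m) ^ (a - b) := Real.rpow_pos_of_pos hzm _
  have p2 : (0:ℝ) < (z + m) ^ (b - m) := Real.rpow_pos_of_pos hzm _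
  have p3 : (0:ℝ) < z ^ (a - b) := Real.rpow_pos_of_pos hz0 _
  simp only [Pi.div_apply]
  rw [e1, e2, e3, e4]
  field_simp
end

section
/- Let g : (0,∞) → [0,∞) be measurable with g(τ) ≤ M for 0 < τ < 1, and suppose (1/Γ(s)) ∫_0^∞ τ^{s−1} e^{−τ} g(τ) dτ = ε^s where 0 < ε < 1 and s > s' > d/2. Suppose furthermore τ^{d/2} g(τ) ≤ c ε^{d/2} for all 0 < τ < ε/2. Then (1/Γ(s')) ∫_0^∞ τ^{s'−1} e^{−τ} g(τ) dτ ≤ [Γ(s)/Γ(s') + 2^{s−s'} Γ(s)/Γ(s') + c/(Γ(s')(s'−d/2))]·ε^{s'}. -/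
open MeasureTheory

/-- The core splitting estimate of Lemma 9.1: let `g ≥ 0` be measurable with `g ≤ M` on
`(0,1)`, `(1/Γ(s))∫_0^∞ τ^{s-1}e^{-τ}g(τ)dτ = ε^s` with `0 < ε < 1` and `s > s' > d/2`,
and `τ^{d/2}g(τ) ≤ c·ε^{d/2}` for `0 < τ < ε/2`.  Then
`(1/Γ(s'))∫_0^∞ τ^{s'-1}e^{-τ}g(τ)dτ
  ≤ (Γ(s)/Γ(s') + 2^{s-s'}Γ(s)/Γ(s') + c/(Γ(s')(s'-d/2)))·ε^{s'}`. -/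
theorem kernel_splitting_estimate (d s s' ε cst M : ℝ)
    (hd : 0 < d) (hs' : d / 2 < s') (hss : s' < s)
    (hε0 : 0 < ε) (hε1 : ε < 1) (hcst : 0 ≤ cst) (hM : 0 ≤ M)
    (g : ℝ → ℝ) (hgmeas : Measurable g) (hg0 : ∀ τ : ℝ, 0 < τ → 0 ≤ g τ)
    (hgM : ∀ τ : ℝ, 0 < τ → τ < 1 → g τ ≤ M)
    (hint : IntegrableOn (fun τ : ℝ => τ ^ (s - 1) * Real.exp (-τ) * g τ) (Set.Ioi 0))
    (heq : (1 / Real.Gamma s) *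
        ∫ τ in Set.Ioi (0 : ℝ), τ ^ (s - 1) * Real.exp (-τ) * g τ = ε ^ s)
    (hpt : ∀ τ : ℝ, 0 < τ → τ < ε / 2 → τ ^ (d / 2) * g τ ≤ cst * ε ^ (d / 2)) :
    (1 / Real.Gamma s') * ∫ τ in Set.Ioi (0 : ℝ), τ ^ (s' - 1) * Real.exp (-τ) * g τ
      ≤ (Real.Gamma s / Real.Gamma s' + 2 ^ (s - s') * Real.Gamma s / Real.Gamma s'
          + cst / (Real.Gamma s' * (s' - d / 2))) * ε ^ s' := by
  have hd2 : (0:ℝ) < d / 2 := by linarith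
  have hs'0 : (0:ℝ) < s' := lt_trans hd2 hs'
  have hs0 : (0:ℝ) < s := lt_trans hs'0 hss
  have hΓs : 0 < Real.Gamma s := Real.Gamma_pos_of_pos hs0
  have hΓs' : 0 < Real.Gamma s' := Real.Gamma_pos_of_pos hs'0
  have hε2 : (0:ℝ) < ε / 2 := by linarith
  set f : ℝ → ℝ := fun τ => τ ^ (s - 1) * Real.exp (-τ) * g τ with hfdef
  set f' : ℝ → ℝ := fun τ => τ ^ (s' - 1) * Real.exp (-τ) * g τ with hf'def
  set h : ℝ → ℝ := fun τ => cst * ε ^ (d / 2) * τ ^ (s' - d / 2 - 1) with hhdef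
  have hf'meas : Measurable f' := by
    apply Measurable.mul _ hgmeas
    apply Measurable.mul _ (Real.measurable_exp.comp measurable_neg)
    fun_prop
  -- value of ∫ f
  have hIf : ∫ τ in Set.Ioi (0:ℝ), f τ = Real.Gamma s * ε ^ s := by
    rw [← heq]; field_simp
  -- nonnegativity of f, f' on Ioi 0
  have hf0 : ∀ τ ∈ Set.Ioi (0:ℝ), 0 ≤ f τ := fun τ hτ =>
    mul_nonneg (mul_nonneg (Real.rpow_nonneg (le_of_lt hτ) _) (Real.exp_nonneg _)) (hg0 τ hτ)
  have hf'0 : ∀ τ ∈ Set.Ioi (0:ℝ), 0 ≤ f' τ := fun τ hτ =>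
    mul_nonneg (mul_nonneg (Real.rpow_nonneg (le_of_lt hτ) _) (Real.exp_nonneg _)) (hg0 τ hτ)
  -- pointwise bound on (0, ε/2)
  have hboundA : ∀ τ ∈ Set.Ioo (0:ℝ) (ε/2), f' τ ≤ h τ := by
    intro τ hτ
    obtain ⟨hτ0, hτε⟩ := hτ
    have h1 : f' τ ≤ τ ^ (s' - 1) * g τ := by
      have := Real.exp_le_one_iff.mpr (by linarith : -τ ≤ 0)
      calc f' τ ≤ τ ^ (s' - 1) * 1 * g τ := by
            apply mul_le_mul_of_nonneg_right _ (hg0 τ hτ0)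
            exact mul_le_mul_of_nonneg_left this (Real.rpow_nonneg hτ0.le _)
        _ = τ ^ (s' - 1) * g τ := by ring
    have h2 : τ ^ (s' - 1) * g τ = τ ^ (s' - d/2 - 1) * (τ ^ (d/2) * g τ) := by
      rw [← mul_assoc, ← Real.rpow_add hτ0]; ring_nf
    have h3 : τ ^ (s' - d/2 - 1) * (τ ^ (d/2) * g τ) ≤ τ ^ (s' - d/2 - 1) * (cst * ε ^ (d/2)) :=
      mul_le_mul_of_nonneg_left (hpt τ hτ0 hτε) (Real.rpow_nonneg hτ0.le _)
    calc f' τ ≤ τ ^ (s' - d/2 - 1) * (cst * ε ^ (d/2)) := by rw [h2] at h1; linarith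
      _ = h τ := by simp [hhdef]; ring
  -- pointwise bound on [ε/2, ∞)
  have hboundB : ∀ τ ∈ Set.Ici (ε/2), f' τ ≤ (ε/2) ^ (s' - s) * f τ := by
    intro τ hτ
    have hτ0 : 0 < τ := lt_of_lt_of_le hε2 hτ
    have h1 : τ ^ (s' - 1) = τ ^ (s - 1) * τ ^ (s' - s) := by
      rw [← Real.rpow_add hτ0]; ring_nf
    have h2 : τ ^ (s' - s) ≤ (ε/2) ^ (s' - s) :=
      Real.rpow_le_rpow_of_nonpos hε2 hτ (by linarith)
    calc f' τ = τ ^ (s' - s) * (τ ^ (s - 1) * Real.exp (-τ) * g τ) := by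
          simp only [hf'def]; rw [h1]; ring
      _ ≤ (ε/2) ^ (s' - s) * (τ ^ (s - 1) * Real.exp (-τ) * g τ) := by
          apply mul_le_mul_of_nonneg_right h2
          exact mul_nonneg (mul_nonneg (Real.rpow_nonneg hτ0.le _) (Real.exp_nonneg _))
            (hg0 τ hτ0)
      _ = (ε/2) ^ (s' - s) * f τ := rfl
  -- integrability of h on Ioo 0 (ε/2)
  have hInth : IntegrableOn h (Set.Ioo 0 (ε/2)) := by
    have : IntervalIntegrable (fun x : ℝ => x ^ (s' - d/2 - 1)) volume 0 (ε/2) :=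
      intervalIntegral.intervalIntegrable_rpow' (by linarith)
    rw [intervalIntegrable_iff_integrableOn_Ioo_of_le hε2.le] at this
    simpa only [hhdef, IntegrableOn] using this.const_mul (cst * ε ^ (d / 2))
  -- integrability of f' on pieces
  have hIntf'A : IntegrableOn f' (Set.Ioo 0 (ε/2)) := by
    apply Integrable.mono hInth (hf'meas.aestronglyMeasurable.restrict)
    filter_upwards [ae_restrict_mem measurableSet_Ioo] with τ hτ
    rw [Real.norm_eq_abs, Real.norm_eq_abs,
      abs_of_nonneg (hf'0 τ (Set.mem_Ioi.mpr hτ.1))]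
    exact le_trans (hboundA τ hτ) (le_abs_self _)
  have hIntfB : IntegrableOn f (Set.Ici (ε/2)) :=
    hint.mono_set (fun x hx => lt_of_lt_of_le hε2 hx)
  have hIntf'B : IntegrableOn f' (Set.Ici (ε/2)) := by
    apply Integrable.mono (hIntfB.const_mul ((ε/2) ^ (s' - s)))
      (hf'meas.aestronglyMeasurable.restrict)
    filter_upwards [ae_restrict_mem measurableSet_Ici] with τ hτ
    have hτ0 : 0 < τ := lt_of_lt_of_le hε2 hτ
    rw [Real.norm_eq_abs, Real.norm_eq_abs, abs_of_nonneg (hf'0 τ hτ0)]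
    exact le_trans (hboundB τ hτ) (le_abs_self _)
  -- split the integral
  have hsplit : ∫ τ in Set.Ioi (0:ℝ), f' τ
      = (∫ τ in Set.Ioo (0:ℝ) (ε/2), f' τ) + ∫ τ in Set.Ici (ε/2), f' τ := by
    rw [← Set.Ioo_union_Ici_eq_Ioi hε2]
    exact setIntegral_union ((Set.Iio_disjoint_Ici le_rfl).mono_left Set.Ioo_subset_Iio_self) measurableSet_Ici hIntf'A hIntf'B
  -- bound on piece A
  have hA : (∫ τ in Set.Ioo (0:ℝ) (ε/2), f' τ) ≤ cst / (s' - d/2) * ε ^ s' := by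
    have step1 : (∫ τ in Set.Ioo (0:ℝ) (ε/2), f' τ) ≤ ∫ τ in Set.Ioo (0:ℝ) (ε/2), h τ :=
      setIntegral_mono_on hIntf'A hInth measurableSet_Ioo hboundA
    have step2 : (∫ τ in Set.Ioo (0:ℝ) (ε/2), h τ)
        = cst * ε ^ (d/2) * ((ε/2) ^ (s' - d/2) / (s' - d/2)) := by
      rw [integral_const_mul, ← integral_Ioc_eq_integral_Ioo,
        ← intervalIntegral.integral_of_le hε2.le,
        integral_rpow (Or.inl (by linarith))]
      rw [Real.zero_rpow (by linarith : s' - d/2 - 1 + 1 ≠ 0)]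
      ring_nf
    have step3 : (ε/2) ^ (s' - d/2) ≤ ε ^ (s' - d/2) :=
      Real.rpow_le_rpow hε2.le (by linarith) (by linarith)
    have step4 : ε ^ (d/2) * ε ^ (s' - d/2) = ε ^ s' := by
      rw [← Real.rpow_add hε0]; ring_nf
    calc (∫ τ in Set.Ioo (0:ℝ) (ε/2), f' τ)
        ≤ cst * ε ^ (d/2) * ((ε/2) ^ (s' - d/2) / (s' - d/2)) := by rw [← step2]; exact step1
      _ ≤ cst * ε ^ (d/2) * (ε ^ (s' - d/2) / (s' - d/2)) := by
          apply mul_le_mul_of_nonneg_left _ (mul_nonneg hcst (Real.rpow_nonneg hε0.le _))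
          exact div_le_div_of_nonneg_right step3 (by linarith)
      _ = cst / (s' - d/2) * ε ^ s' := by
          rw [← step4]; field_simp
  -- bound on piece B
  have hB : (∫ τ in Set.Ici (ε/2), f' τ) ≤ 2 ^ (s - s') * Real.Gamma s * ε ^ s' := by
    have step1 : (∫ τ in Set.Ici (ε/2), f' τ)
        ≤ ∫ τ in Set.Ici (ε/2), (ε/2) ^ (s' - s) * f τ :=
      setIntegral_mono_on hIntf'B (hIntfB.const_mul _) measurableSet_Ici hboundB
    have step2 : (∫ τ in Set.Ici (ε/2), (ε/2) ^ (s' - s) * f τ)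
        = (ε/2) ^ (s' - s) * ∫ τ in Set.Ici (ε/2), f τ := integral_const_mul _ _
    have step3 : (∫ τ in Set.Ici (ε/2), f τ) ≤ ∫ τ in Set.Ioi (0:ℝ), f τ := by
      apply setIntegral_mono_set hint
      · filter_upwards [ae_restrict_mem measurableSet_Ioi] with τ hτ using hf0 τ hτ
      · exact Filter.Eventually.of_forall (fun x hx => lt_of_lt_of_le hε2 hx)
    have step4 : (ε/2) ^ (s' - s) * (Real.Gamma s * ε ^ s)
        = 2 ^ (s - s') * Real.Gamma s * ε ^ s' := by
      have h2 : (2:ℝ) ^ (s' - s) = ((2:ℝ) ^ (s - s'))⁻¹ := by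
        rw [← Real.rpow_neg (by norm_num : (0:ℝ) ≤ 2), neg_sub]
      have h3 : ε ^ (s' - s) * ε ^ s = ε ^ s' := by
        rw [← Real.rpow_add hε0]; ring_nf
      rw [Real.div_rpow hε0.le (by norm_num : (0:ℝ) ≤ 2), h2, div_eq_mul_inv, inv_inv]
      linear_combination (2 ^ (s - s') * Real.Gamma s) * h3
    have hpos : (0:ℝ) ≤ (ε/2) ^ (s' - s) := Real.rpow_nonneg hε2.le _
    calc (∫ τ in Set.Ici (ε/2), f' τ)
        ≤ (ε/2) ^ (s' - s) * ∫ τ in Set.Ici (ε/2), f τ := step2 ▸ step1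
      _ ≤ (ε/2) ^ (s' - s) * ∫ τ in Set.Ioi (0:ℝ), f τ :=
          mul_le_mul_of_nonneg_left step3 hpos
      _ = 2 ^ (s - s') * Real.Gamma s * ε ^ s' := by rw [hIf, step4]
  -- combine
  have hcomb : (∫ τ in Set.Ioi (0:ℝ), f' τ)
      ≤ (2 ^ (s - s') * Real.Gamma s + cst / (s' - d/2)) * ε ^ s' := by
    rw [hsplit]; nlinarith [Real.rpow_nonneg hε0.le s']
  have hεs'pos : (0:ℝ) ≤ ε ^ s' := Real.rpow_nonneg hε0.le _
  have final : (1 / Real.Gamma s') * ∫ τ in Set.Ioi (0:ℝ), f' τ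
      ≤ (1 / Real.Gamma s') * ((2 ^ (s - s') * Real.Gamma s + cst / (s' - d/2)) * ε ^ s') :=
    mul_le_mul_of_nonneg_left hcomb (by positivity)
  refine le_trans final ?_
  have hexp : (0:ℝ) ≤ (2:ℝ) ^ (s - s') := Real.rpow_nonneg (by norm_num) _
  have key : (1 / Real.Gamma s') * ((2 ^ (s - s') * Real.Gamma s + cst / (s' - d/2)) * ε ^ s')
      = (2 ^ (s - s') * Real.Gamma s / Real.Gamma s'
          + cst / (Real.Gamma s' * (s' - d/2))) * ε ^ s' := by
    have hcoef : (1 / Real.Gamma s') * (2 ^ (s - s') * Real.Gamma s + cst / (s' - d/2))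
        = 2 ^ (s - s') * Real.Gamma s / Real.Gamma s'
          + cst / (Real.Gamma s' * (s' - d/2)) := by
      rw [mul_add]
      congr 1
      · rw [one_div, inv_mul_eq_div]
      · rw [div_mul_div_comm, one_mul]
    rw [← mul_assoc, hcoef]
  rw [key]
  clear final
  have : (0:ℝ) ≤ Real.Gamma s / Real.Gamma s' * ε ^ s' := by positivity
  nlinarith [this]
end
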